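/- Let p be a stochastic tournament on a finite set V with |V| = n ≥ 3 and let ε > 0. Suppose the sum of disc(T) over all unordered triangles T (3-element subsets of V) is at most ε * C(n, 3). Then there exists a reversible stochastic tournament p' on V such that the sum over all unordered pairs {x, y} of distinct vertices of |p x y − p' x y| is strictly less than ε * C(n, 2). -/

import Mathlib

set_option maxHeartbeats 1600000

lemma choose2_mul (m : ℕ) : (m + 2).choose 2 * 2 = (m + 2) * (m + 1) := by
  induction m with
  | zero => decide
  | succ k ih =>
    have h : (k + 3).choose 2 = (k + 2).choose 1 + (k + 2).choose 2 :=
      Nat.choose_succ_succ (k + 2) 1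
    rw [Nat.choose_one_right] at h
    nlinarith [ih, h]

lemma choose3_mul (m : ℕ) : (m + 3).choose 3 * 6 = (m + 3) * (m + 2) * (m + 1) := by
  induction m with
  | zero => decide
  | succ k ih =>
    have h : (k + 4).choose 3 = (k + 3).choose 2 + (k + 3).choose 3 :=
      Nat.choose_succ_succ (k + 3) 2
    have h2 := choose2_mul (k + 1)
    nlinarith [ih, h, h2]

lemma nat_ineq {n : ℕ} (hn3 : 3 ≤ n) : 6 * n.choose 3 < 2 * (n * n.choose 2) := by
  obtain ⟨m, rfl⟩ : ∃ m, n = m + 3 := ⟨n - 3, by omega⟩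
  have h3 := choose3_mul m
  have h2 := choose2_mul (m + 1)
  nlinarith [h3, h2]

lemma card_three {α : Type*} [DecidableEq α] {x y z : α}
    (hxy : x ≠ y) (hxz : x ≠ z) (hyz : y ≠ z) :
    ({x, y, z} : Finset α).card = 3 := by
  rw [Finset.card_insert_of_notMem (by simp [hxy, hxz]),
    Finset.card_insert_of_notMem (by simp [hyz]), Finset.card_singleton]

lemma card_le_six {α : Type*} [DecidableEq α] (a b c d e f : α) :
    ({a, b, c, d, e, f} : Finset α).card ≤ 6 := by
  have h1 := Finset.card_insert_le a ({b, c, d, e, f} : Finset α)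
  have h2 := Finset.card_insert_le b ({c, d, e, f} : Finset α)
  have h3 := Finset.card_insert_le c ({d, e, f} : Finset α)
  have h4 := Finset.card_insert_le d ({e, f} : Finset α)
  have h5 := Finset.card_insert_le e ({f} : Finset α)
  have h6 : ({f} : Finset α).card = 1 := Finset.card_singleton f
  omega

lemma mem_six {α : Type*} [DecidableEq α] {x y z x0 y0 z0 : α}
    (hyx : y ≠ x) (hxz : x ≠ z) (hyz : y ≠ z)
    (h : ({x, y, z} : Finset α) = {x0, y0, z0}) :
    (((z, x), y) : (α × α) × α) ∈
      ({((z0, x0), y0), ((z0, y0), x0), ((x0, z0), y0), ((x0, y0), z0),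
        ((y0, z0), x0), ((y0, x0), z0)} : Finset ((α × α) × α)) := by
  have hx : x ∈ ({x0, y0, z0} : Finset α) := by rw [← h]; simp
  have hy : y ∈ ({x0, y0, z0} : Finset α) := by rw [← h]; simp
  have hz : z ∈ ({x0, y0, z0} : Finset α) := by rw [← h]; simp
  simp only [Finset.mem_insert, Finset.mem_singleton] at hx hy hz
  simp only [Finset.mem_insert, Finset.mem_singleton, Prod.mk.injEq]
  rcases hx with rfl | rfl | rfl <;> rcases hy with rfl | rfl | rfl <;>
    rcases hz with rfl | rfl | rfl <;> tauto

lemma triple_sum_le {V : Type*} [Fintype V] [DecidableEq V] (D : Finset V → ℝ)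
    (hD0 : ∀ T ∈ Finset.powersetCard 3 (Finset.univ : Finset V), 0 ≤ D T) :
    ∑ z : V, ∑ x : V, ∑ y : V,
        (if (y ≠ x ∧ x ≠ z ∧ y ≠ z) then D {x, y, z} else 0) ≤
      6 * ∑ T ∈ Finset.powersetCard 3 (Finset.univ : Finset V), D T := by
  classical
  let s : Finset ((V × V) × V) :=
    ((Finset.univ ×ˢ Finset.univ) ×ˢ Finset.univ).filter
      (fun t => t.2 ≠ t.1.2 ∧ t.1.2 ≠ t.1.1 ∧ t.2 ≠ t.1.1)
  let g : (V × V) × V → Finset V := fun t => {t.1.2, t.2, t.1.1}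
  have h1 : ∑ z : V, ∑ x : V, ∑ y : V,
      (if (y ≠ x ∧ x ≠ z ∧ y ≠ z) then D {x, y, z} else 0) =
      ∑ t ∈ s, D (g t) := by
    rw [Finset.sum_filter, Finset.sum_product, Finset.sum_product]
  have himg : s.image g ⊆ Finset.powersetCard 3 (Finset.univ : Finset V) := by
    intro b hb
    obtain ⟨t, ht, rfl⟩ := Finset.mem_image.mp hb
    rw [Finset.mem_filter] at ht
    obtain ⟨-, hyx, hxz, hyz⟩ := ht
    rw [Finset.mem_powersetCard]
    exact ⟨Finset.subset_univ _, card_three (Ne.symm hyx) hxz hyz⟩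
  have hfib : ∀ b ∈ s.image g, (s.filter (fun t => g t = b)).card ≤ 6 := by
    intro b hb
    obtain ⟨t0, ht0, hgt0⟩ := Finset.mem_image.mp hb
    obtain ⟨⟨z0, x0⟩, y0⟩ := t0
    have hsub : s.filter (fun t => g t = b) ⊆
        ({((z0, x0), y0), ((z0, y0), x0), ((x0, z0), y0), ((x0, y0), z0),
          ((y0, z0), x0), ((y0, x0), z0)} : Finset ((V × V) × V)) := by
      intro t ht
      rw [Finset.mem_filter, Finset.mem_filter] at ht
      obtain ⟨⟨-, hyx, hxz, hyz⟩, htb⟩ := ht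
      obtain ⟨⟨z, x⟩, y⟩ := t
      exact mem_six hyx hxz hyz (htb.trans hgt0.symm)
    exact le_trans (Finset.card_le_card hsub) (card_le_six _ _ _ _ _ _)
  calc ∑ z : V, ∑ x : V, ∑ y : V,
        (if (y ≠ x ∧ x ≠ z ∧ y ≠ z) then D {x, y, z} else 0)
      = ∑ t ∈ s, D (g t) := h1
    _ = ∑ b ∈ s.image g, (s.filter (fun t => g t = b)).card • D b :=
        Finset.sum_comp D g
    _ ≤ ∑ b ∈ s.image g, 6 * D b := by
        refine Finset.sum_le_sum (fun b hb => ?_)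
        rw [nsmul_eq_mul]
        exact mul_le_mul_of_nonneg_right
          (by exact_mod_cast hfib b hb) (hD0 b (himg hb))
    _ ≤ ∑ b ∈ Finset.powersetCard 3 (Finset.univ : Finset V), 6 * D b := by
        refine Finset.sum_le_sum_of_subset_of_nonneg himg (fun b hb _ => ?_)
        exact mul_nonneg (by norm_num) (hD0 b hb)
    _ = 6 * ∑ T ∈ Finset.powersetCard 3 (Finset.univ : Finset V), D T := by
        rw [Finset.mul_sum]

/-- The discrepancy of the triangle `(x, y, z)` of a stochastic tournament `p`. -/
noncomputable def disc {V : Type*} (p : V → V → ℝ) (x y z : V) : ℝ :=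
  max |p x y - p z y * p x z / (p z y * p x z + p y z * p z x)|
    (max |p y z - p y x * p x z / (p y x * p x z + p x y * p z x)|
      |p z x - p y x * p z y / (p y x * p z y + p x y * p y z)|)

/-- If the total discrepancy over all unordered triangles is at most
`ε * C(n, 3)`, then there is a reversible stochastic tournament `p'` at `L¹`
distance (summed over unordered pairs, i.e. half the ordered pair sum)
strictly less than `ε * C(n, 2)` from `p`. -/
theorem small_discrepancy_implies_close_to_reversible {V : Type*} [Fintype V]
    [DecidableEq V]
    (p : V → V → ℝ)
    (hp : ∀ x y : V, x ≠ y → 0 < p x y ∧ p x y < 1 ∧ p x y + p y x = 1)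
    (n : ℕ) (hn : Fintype.card V = n) (hn3 : 3 ≤ n)
    (ε : ℝ) (hε : 0 < ε)
    (D : Finset V → ℝ)
    (hD : ∀ x y z : V, x ≠ y → x ≠ z → y ≠ z → D {x, y, z} = disc p x y z)
    (hsum : ∑ T ∈ Finset.powersetCard 3 (Finset.univ : Finset V), D T ≤
      ε * (n.choose 3 : ℝ)) :
    ∃ p' : V → V → ℝ,
      (∀ x y : V, x ≠ y → 0 < p' x y ∧ p' x y < 1 ∧ p' x y + p' y x = 1) ∧
      (∃ π : V → ℝ, (∀ x, 0 < π x) ∧ (∑ x, π x) = 1 ∧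
        ∀ x y : V, x ≠ y → π x * p' x y = π y * p' y x) ∧
      (1 / 2) * ∑ x : V, ∑ y ∈ Finset.univ.erase x, |p x y - p' x y|
        < ε * (n.choose 2 : ℝ) := by
  classical
  have hpos : ∀ x y : V, x ≠ y → 0 < p x y := fun x y h => (hp x y h).1
  have hone : ∀ x y : V, x ≠ y → p x y + p y x = 1 := fun x y h => (hp x y h).2.2
  have hcard : 0 < Fintype.card V := by omega
  have hne : Nonempty V := Fintype.card_pos_iff.mp hcard
  have hD0 : ∀ T ∈ Finset.powersetCard 3 (Finset.univ : Finset V), 0 ≤ D T := by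
    intro T hT
    rw [Finset.mem_powersetCard] at hT
    obtain ⟨x, y, z, hxy, hxz, hyz, rfl⟩ := Finset.card_eq_three.mp hT.2
    rw [hD x y z hxy hxz hyz]
    exact le_trans (abs_nonneg _) (le_max_left _ _)
  set A : V → ℝ := fun z => ∑ x : V, ∑ y : V,
      (if (y ≠ x ∧ x ≠ z ∧ y ≠ z) then D {x, y, z} else 0) with hA
  have hmain : ∑ w : V, A w ≤ 6 * (ε * (n.choose 3 : ℝ)) :=
    le_trans (triple_sum_le D hD0) (by linarith [hsum])
  obtain ⟨z, -, hzmin⟩ := Finset.exists_min_image Finset.univ A Finset.univ_nonempty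
  have h2 : (n : ℝ) * A z ≤ ∑ w : V, A w := by
    have := Finset.card_nsmul_le_sum Finset.univ A (A z)
      (fun w _ => hzmin w (Finset.mem_univ w))
    rwa [Finset.card_univ, hn, nsmul_eq_mul] at this
  set q : V → V → ℝ := fun x y =>
    if x = z then p z y else if y = z then p x z
    else p z y * p x z / (p z y * p x z + p y z * p z x) with hqdef
  have hq_z : ∀ y : V, q z y = p z y := fun y => by simp only [hqdef, if_pos rfl]
  have hq_z' : ∀ x : V, x ≠ z → q x z = p x z := fun x h => by
    simp [hqdef, h]
  have hq_f : ∀ x y : V, x ≠ z → y ≠ z →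
      q x y = p z y * p x z / (p z y * p x z + p y z * p z x) :=
    fun x y hx hy => by simp only [hqdef, hx, hy, if_false]
  have hden : ∀ x y : V, x ≠ z → y ≠ z →
      0 < p z y * p x z + p y z * p z x := by
    intro x y hx hy
    have h1 := hpos z y (Ne.symm hy)
    have h2 := hpos x z hx
    have h3 := hpos y z hy
    have h4 := hpos z x (Ne.symm hx)
    positivity
  have hqpos : ∀ x y : V, x ≠ y → 0 < q x y := by
    intro x y hxy
    by_cases hx : x = z
    · rw [hx, hq_z]; exact hpos z y (hx ▸ hxy)
    · by_cases hy : y = z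
      · rw [hy, hq_z' x hx]; exact hpos x z hx
      · rw [hq_f x y hx hy]
        exact div_pos (mul_pos (hpos z y (Ne.symm hy)) (hpos x z hx))
          (hden x y hx hy)
  have hqone : ∀ x y : V, x ≠ y → q x y + q y x = 1 := by
    intro x y hxy
    by_cases hx : x = z
    · have hzy : z ≠ y := by rw [← hx]; exact hxy
      rw [hx, hq_z, hq_z' y (Ne.symm hzy)]
      exact hone z y hzy
    · by_cases hy : y = z
      · have hxz' : x ≠ z := by rw [← hy]; exact hxy
        rw [hy, hq_z' x hxz', hq_z]
        exact hone x z hxz'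
      · rw [hq_f x y hx hy, hq_f y x hy hx]
        have d1 := ne_of_gt (hden x y hx hy)
        have d2 := ne_of_gt (hden y x hy hx)
        rw [div_add_div _ _ d1 d2, div_eq_one_iff_eq (mul_ne_zero d1 d2)]
        ring
  have hq_prob : ∀ x y : V, x ≠ y → 0 < q x y ∧ q x y < 1 ∧ q x y + q y x = 1 := by
    intro x y hxy
    refine ⟨hqpos x y hxy, ?_, hqone x y hxy⟩
    have h1 := hqpos y x (Ne.symm hxy)
    have h2 := hqone x y hxy
    linarith
  have hrev : ∃ π : V → ℝ, (∀ x, 0 < π x) ∧ (∑ x, π x) = 1 ∧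
      ∀ x y : V, x ≠ y → π x * q x y = π y * q y x := by
    set π0 : V → ℝ := fun x => if x = z then 1 else p z x / p x z with hπ0
    have hπ0pos : ∀ x, 0 < π0 x := by
      intro x
      by_cases hx : x = z
      · simp [hπ0, hx]
      · simp only [hπ0, hx, if_false]
        exact div_pos (hpos z x (Ne.symm hx)) (hpos x z hx)
    have hcpos : 0 < ∑ x : V, π0 x :=
      Finset.sum_pos (fun x _ => hπ0pos x) Finset.univ_nonempty
    refine ⟨fun x => π0 x / ∑ w : V, π0 w, fun x => div_pos (hπ0pos x) hcpos,
      ?_, ?_⟩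
    · rw [← Finset.sum_div, div_self (ne_of_gt hcpos)]
    · intro x y hxy
      have key : π0 x * q x y = π0 y * q y x := by
        by_cases hx : x = z
        · have hy : y ≠ z := by intro h; exact hxy (hx.trans h.symm)
          rw [hx, hq_z, hq_z' y hy]
          simp only [hπ0, if_pos rfl, hy, if_false]
          rw [one_mul, div_mul_cancel₀ _ (ne_of_gt (hpos y z hy))]
        · by_cases hy : y = z
          · have hx' : x ≠ z := by rw [← hy]; exact hxy
            rw [hy, hq_z, hq_z' x hx']
            simp only [hπ0, if_pos rfl, hx', if_false]
            rw [one_mul, div_mul_cancel₀ _ (ne_of_gt (hpos x z hx'))]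
          · rw [hq_f x y hx hy, hq_f y x hy hx]
            simp only [hπ0, hx, hy, if_false]
            have d1 := ne_of_gt (hden x y hx hy)
            have d2 := ne_of_gt (hden y x hy hx)
            have e1 := ne_of_gt (hpos x z hx)
            have e2 := ne_of_gt (hpos y z hy)
            rw [div_mul_div_comm, div_mul_div_comm,
              div_eq_div_iff (mul_ne_zero e1 d1) (mul_ne_zero e2 d2)]
            ring
      rw [div_mul_eq_mul_div, div_mul_eq_mul_div, key]
  have hord : ∑ x : V, ∑ y ∈ Finset.univ.erase x, |p x y - q x y| ≤ A z := by
    rw [hA]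
    refine Finset.sum_le_sum (fun x _ => ?_)
    have step : ∑ y ∈ Finset.univ.erase x, |p x y - q x y| ≤
        ∑ y ∈ Finset.univ.erase x,
          (if (y ≠ x ∧ x ≠ z ∧ y ≠ z) then D {x, y, z} else 0) := by
      refine Finset.sum_le_sum (fun y hy => ?_)
      have hyx : y ≠ x := Finset.ne_of_mem_erase hy
      by_cases hxz : x = z
      · rw [hxz, hq_z]
        simp
      · by_cases hyz : y = z
        · rw [hyz, hq_z' x hxz]
          simp
        · rw [if_pos ⟨hyx, hxz, hyz⟩, hD x y z (Ne.symm hyx) hxz hyz,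
            hq_f x y hxz hyz]
          exact le_max_left _ _
    refine step.trans (le_of_eq ?_)
    exact Finset.sum_erase _ (by simp)
  have hc : (6 : ℝ) * (n.choose 3 : ℝ) < 2 * ((n : ℝ) * (n.choose 2 : ℝ)) := by
    exact_mod_cast nat_ineq hn3
  have hn0 : (0 : ℝ) < n := by exact_mod_cast (by omega : 0 < n)
  have hAz : A z < 2 * (ε * (n.choose 2 : ℝ)) := by
    have h3 : (n : ℝ) * A z ≤ 6 * (ε * (n.choose 3 : ℝ)) := le_trans h2 hmain
    have h4 : 6 * (ε * (n.choose 3 : ℝ)) <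
        (n : ℝ) * (2 * (ε * (n.choose 2 : ℝ))) := by
      nlinarith [hc, hε]
    exact lt_of_mul_lt_mul_left (lt_of_le_of_lt h3 h4) (le_of_lt hn0)
  exact ⟨q, hq_prob, hrev, by linarith [hord, hAz]⟩
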